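/- Let p be a prime, ℓ₁ ≥ ℓ₂ ≥ 1, and let G = Aut(ℤ/p^{ℓ₁}ℤ ⊕ ℤ/p^{ℓ₂}ℤ). The restriction of automorphisms to the submodule p·(ℤ/p^{ℓ₁}ℤ ⊕ ℤ/p^{ℓ₂}ℤ) defines a surjective group homomorphism G → Aut(ℤ/p^{ℓ₁−1}ℤ ⊕ ℤ/p^{ℓ₂−1}ℤ) (interpreting ℤ/p⁰ℤ = 0). -/

import Mathlib

namespace Stmt17

variable {p : ℕ}

/-- multiplication by `p` then modular reduction for nat casts -/
lemma cast_mul_mod (hℓ : 1 ≤ ℓ) (a : ℕ) :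
    ((p * (a % p ^ (ℓ - 1)) : ℕ) : ZMod (p ^ ℓ)) = ((p * a : ℕ) : ZMod (p ^ ℓ)) := by
  rw [ZMod.natCast_eq_natCast_iff]
  have h := (Nat.mod_modEq a (p ^ (ℓ - 1))).mul_left' (c := p)
  rwa [← pow_succ', Nat.sub_add_cancel hℓ] at h

def E (p ℓ : ℕ) (x : ZMod (p ^ (ℓ - 1))) : ZMod (p ^ ℓ) :=
  (p : ZMod (p ^ ℓ)) * (x.val : ZMod (p ^ ℓ))

lemma E_eq (ℓ : ℕ) (x : ZMod (p ^ (ℓ - 1))) :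
    E p ℓ x = ((p * x.val : ℕ) : ZMod (p ^ ℓ)) := by
  simp [E]

lemma E_cast (hp : p ≠ 0) (hℓ : 1 ≤ ℓ) (a : ℕ) :
    E p ℓ ((a : ℕ) : ZMod (p ^ (ℓ - 1))) = ((p * a : ℕ) : ZMod (p ^ ℓ)) := by
  haveI : NeZero (p ^ (ℓ - 1)) := ⟨pow_ne_zero _ hp⟩
  rw [E_eq, ZMod.val_natCast, cast_mul_mod hℓ]

lemma E_add (hp : p ≠ 0) (hℓ : 1 ≤ ℓ) (x y : ZMod (p ^ (ℓ - 1))) :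
    E p ℓ (x + y) = E p ℓ x + E p ℓ y := by
  haveI : NeZero (p ^ (ℓ - 1)) := ⟨pow_ne_zero _ hp⟩
  have hx : x = ((x.val : ℕ) : ZMod (p ^ (ℓ - 1))) := by
    simp [ZMod.natCast_val, ZMod.cast_id]
  have hy : y = ((y.val : ℕ) : ZMod (p ^ (ℓ - 1))) := by
    simp [ZMod.natCast_val, ZMod.cast_id]
  rw [hx, hy, ← Nat.cast_add, E_cast hp hℓ, E_cast hp hℓ, E_cast hp hℓ,
    Nat.mul_add, Nat.cast_add]

lemma E_inj (hp : p ≠ 0) (hℓ : 1 ≤ ℓ) : Function.Injective (E p ℓ) := by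
  haveI : NeZero (p ^ (ℓ - 1)) := ⟨pow_ne_zero _ hp⟩
  haveI : NeZero (p ^ ℓ) := ⟨pow_ne_zero _ hp⟩
  intro x y h
  rw [E_eq, E_eq] at h
  have hpow : p * p ^ (ℓ - 1) = p ^ ℓ := by rw [← pow_succ', Nat.sub_add_cancel hℓ]
  have hx : p * x.val < p ^ ℓ := by
    rw [← hpow]; exact Nat.mul_lt_mul_of_pos_left (ZMod.val_lt x) (Nat.pos_of_ne_zero hp)
  have hy : p * y.val < p ^ ℓ := by
    rw [← hpow]; exact Nat.mul_lt_mul_of_pos_left (ZMod.val_lt y) (Nat.pos_of_ne_zero hp)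
  have := congrArg ZMod.val h
  rw [ZMod.val_cast_of_lt hx, ZMod.val_cast_of_lt hy] at this
  exact ZMod.val_injective _ (Nat.eq_of_mul_eq_mul_left (Nat.pos_of_ne_zero hp) this)

lemma E_smul (x : ZMod (p ^ (ℓ - 1))) :
    E p ℓ x = p • ((x.val : ℕ) : ZMod (p ^ ℓ)) := by
  rw [E, nsmul_eq_mul]

lemma E_rho (hp : p ≠ 0) (hℓ : 1 ≤ ℓ) (y : ZMod (p ^ ℓ)) :
    E p ℓ ((y.val : ℕ) : ZMod (p ^ (ℓ - 1))) = p • y := by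
  haveI : NeZero (p ^ ℓ) := ⟨pow_ne_zero _ hp⟩
  rw [E_cast hp hℓ, nsmul_eq_mul, Nat.cast_mul]
  simp [ZMod.natCast_val, ZMod.cast_id]


/-- Nakayama-style surjectivity for finite-exponent p-groups -/
lemma nakayama {M : Type*} [AddCommGroup M] (f : M →+ M) (p n : ℕ)
    (hn : ∀ x : M, p ^ n • x = 0) (h : ∀ x : M, ∃ y z, x = f y + p • z) :
    Function.Surjective f := by
  have key : ∀ j, ∀ x : M, ∃ y z, x = f y + p ^ j • z := by
    intro j
    induction j with
    | zero => intro x; exact ⟨0, x, by simp⟩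
    | succ j ih =>
      intro x
      obtain ⟨y, z, hyz⟩ := ih x
      obtain ⟨w, v, hwv⟩ := h z
      refine ⟨y + p ^ j • w, v, ?_⟩
      rw [map_add, AddMonoidHom.map_nsmul, hyz, hwv, smul_add, smul_smul,
        ← pow_succ]
      abel
  intro x
  obtain ⟨y, z, hx⟩ := key n x
  exact ⟨y, by rw [hx, hn z, add_zero]⟩

/-- additive homs out of `ZMod a × ZMod b` are determined by the two generators -/
lemma prod_hom_ext {a b : ℕ} [NeZero a] [NeZero b] {C : Type*} [AddCommMonoid C]
    {f g : ZMod a × ZMod b →+ C}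
    (h1 : f (1, 0) = g (1, 0)) (h2 : f (0, 1) = g (0, 1)) : f = g := by
  ext ⟨x, y⟩
  have hx : (x, y) = x.val • ((1 : ZMod a), (0 : ZMod b)) +
      y.val • ((0 : ZMod a), (1 : ZMod b)) := by
    have e1 : x.val • (1 : ZMod a) = x := by
      rw [nsmul_eq_mul, mul_one, ZMod.natCast_val, ZMod.cast_id]
    have e2 : y.val • (1 : ZMod b) = y := by
      rw [nsmul_eq_mul, mul_one, ZMod.natCast_val, ZMod.cast_id]
    simp [Prod.ext_iff, e1, e2]
  rw [hx, map_add, map_add, AddMonoidHom.map_nsmul, AddMonoidHom.map_nsmul,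
    AddMonoidHom.map_nsmul, AddMonoidHom.map_nsmul, h1, h2]

section Main

variable (p ℓ₁ ℓ₂ : ℕ)

def eF (s : ZMod (p ^ (ℓ₁ - 1)) × ZMod (p ^ (ℓ₂ - 1))) :
    ZMod (p ^ ℓ₁) × ZMod (p ^ ℓ₂) := (E p ℓ₁ s.1, E p ℓ₂ s.2)

def rho : ZMod (p ^ ℓ₁) × ZMod (p ^ ℓ₂) →+ ZMod (p ^ (ℓ₁ - 1)) × ZMod (p ^ (ℓ₂ - 1)) :=
  ((ZMod.castHom (pow_dvd_pow p (Nat.sub_le ℓ₁ 1)) (ZMod (p ^ (ℓ₁ - 1)))).toAddMonoidHom.comp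
      (AddMonoidHom.fst _ _)).prod
    ((ZMod.castHom (pow_dvd_pow p (Nat.sub_le ℓ₂ 1)) (ZMod (p ^ (ℓ₂ - 1)))).toAddMonoidHom.comp
      (AddMonoidHom.snd _ _))

def liftF (m : ZMod (p ^ (ℓ₁ - 1)) × ZMod (p ^ (ℓ₂ - 1))) :
    ZMod (p ^ ℓ₁) × ZMod (p ^ ℓ₂) := ((m.1.val : ZMod (p ^ ℓ₁)), (m.2.val : ZMod (p ^ ℓ₂)))

variable {p ℓ₁ ℓ₂}
variable (hp : p ≠ 0) (h12 : ℓ₂ ≤ ℓ₁) (h2 : 1 ≤ ℓ₂)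
include hp h12 h2

lemma rho_apply (m : ZMod (p ^ ℓ₁) × ZMod (p ^ ℓ₂)) :
    rho p ℓ₁ ℓ₂ m = (((m.1.val : ℕ) : ZMod (p ^ (ℓ₁ - 1))),
      ((m.2.val : ℕ) : ZMod (p ^ (ℓ₂ - 1)))) := by
  haveI : NeZero (p ^ ℓ₁) := ⟨pow_ne_zero _ hp⟩
  haveI : NeZero (p ^ ℓ₂) := ⟨pow_ne_zero _ hp⟩
  simp [rho, ZMod.castHom_apply, ← ZMod.natCast_val]

lemma eF_rho (m : ZMod (p ^ ℓ₁) × ZMod (p ^ ℓ₂)) :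
    eF p ℓ₁ ℓ₂ (rho p ℓ₁ ℓ₂ m) = p • m := by
  rw [rho_apply hp h12 h2]
  exact Prod.ext (E_rho hp (le_trans h2 h12) m.1) (E_rho hp h2 m.2)

lemma eF_smul (s : ZMod (p ^ (ℓ₁ - 1)) × ZMod (p ^ (ℓ₂ - 1))) :
    eF p ℓ₁ ℓ₂ s = p • liftF p ℓ₁ ℓ₂ s :=
  Prod.ext (E_smul s.1) (E_smul s.2)

lemma eF_inj : Function.Injective (eF p ℓ₁ ℓ₂) := by
  intro s t h
  rw [Prod.ext_iff] at h ⊢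
  exact ⟨E_inj hp (le_trans h2 h12) h.1, E_inj hp h2 h.2⟩

lemma eF_add (s t : ZMod (p ^ (ℓ₁ - 1)) × ZMod (p ^ (ℓ₂ - 1))) :
    eF p ℓ₁ ℓ₂ (s + t) = eF p ℓ₁ ℓ₂ s + eF p ℓ₁ ℓ₂ t :=
  Prod.ext (E_add hp (le_trans h2 h12) s.1 t.1) (E_add hp h2 s.2 t.2)

lemma rho_lift (s : ZMod (p ^ (ℓ₁ - 1)) × ZMod (p ^ (ℓ₂ - 1))) :
    rho p ℓ₁ ℓ₂ (liftF p ℓ₁ ℓ₂ s) = s := by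
  haveI : NeZero (p ^ (ℓ₁ - 1)) := ⟨pow_ne_zero _ hp⟩
  haveI : NeZero (p ^ (ℓ₂ - 1)) := ⟨pow_ne_zero _ hp⟩
  rw [rho_apply hp h12 h2]
  have l1 : s.1.val < p ^ ℓ₁ :=
    lt_of_lt_of_le (ZMod.val_lt s.1) (Nat.pow_le_pow_right (Nat.pos_of_ne_zero hp) (Nat.sub_le ℓ₁ 1))
  have l2 : s.2.val < p ^ ℓ₂ :=
    lt_of_lt_of_le (ZMod.val_lt s.2) (Nat.pow_le_pow_right (Nat.pos_of_ne_zero hp) (Nat.sub_le ℓ₂ 1))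
  rw [Prod.ext_iff]
  constructor
  · show (((s.1.val : ZMod (p ^ ℓ₁)).val : ℕ) : ZMod (p ^ (ℓ₁ - 1))) = s.1
    rw [ZMod.val_cast_of_lt l1, ZMod.natCast_val, ZMod.cast_id]
  · show (((s.2.val : ZMod (p ^ ℓ₂)).val : ℕ) : ZMod (p ^ (ℓ₂ - 1))) = s.2
    rw [ZMod.val_cast_of_lt l2, ZMod.natCast_val, ZMod.cast_id]

def gf (φ : AddAut (ZMod (p ^ ℓ₁) × ZMod (p ^ ℓ₂)))
    (s : ZMod (p ^ (ℓ₁ - 1)) × ZMod (p ^ (ℓ₂ - 1))) :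
    ZMod (p ^ (ℓ₁ - 1)) × ZMod (p ^ (ℓ₂ - 1)) :=
  rho p ℓ₁ ℓ₂ (φ (liftF p ℓ₁ ℓ₂ s))

lemma gf_key (φ : AddAut (ZMod (p ^ ℓ₁) × ZMod (p ^ ℓ₂)))
    (s : ZMod (p ^ (ℓ₁ - 1)) × ZMod (p ^ (ℓ₂ - 1))) :
    eF p ℓ₁ ℓ₂ (gf φ s) = φ (eF p ℓ₁ ℓ₂ s) := by
  rw [gf, eF_rho hp h12 h2, eF_smul hp h12 h2, ← map_nsmul]


lemma gf_add (φ : AddAut (ZMod (p ^ ℓ₁) × ZMod (p ^ ℓ₂)))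
    (s t : ZMod (p ^ (ℓ₁ - 1)) × ZMod (p ^ (ℓ₂ - 1))) :
    gf φ (s + t) = gf φ s + gf φ t := by
  apply eF_inj hp h12 h2
  rw [eF_add hp h12 h2, gf_key hp h12 h2, gf_key hp h12 h2, gf_key hp h12 h2,
    eF_add hp h12 h2, map_add]

lemma gf_mul (φ ψ : AddAut (ZMod (p ^ ℓ₁) × ZMod (p ^ ℓ₂)))
    (s : ZMod (p ^ (ℓ₁ - 1)) × ZMod (p ^ (ℓ₂ - 1))) :
    gf (φ + ψ) s = gf φ (gf ψ s) := by
  apply eF_inj hp h12 h2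
  rw [gf_key hp h12 h2, gf_key hp h12 h2, gf_key hp h12 h2, AddAut.add_apply]

lemma gf_inv (φ : AddAut (ZMod (p ^ ℓ₁) × ZMod (p ^ ℓ₂)))
    (s : ZMod (p ^ (ℓ₁ - 1)) × ZMod (p ^ (ℓ₂ - 1))) :
    gf (-φ) (gf φ s) = s := by
  apply eF_inj hp h12 h2
  rw [gf_key hp h12 h2, gf_key hp h12 h2, AddAut.neg_apply_self]

/-- the induced automorphism on the reduced group -/
def piAut (φ : AddAut (ZMod (p ^ ℓ₁) × ZMod (p ^ ℓ₂))) :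
    AddAut (ZMod (p ^ (ℓ₁ - 1)) × ZMod (p ^ (ℓ₂ - 1))) where
  toFun := gf φ
  invFun := gf (-φ)
  left_inv s := gf_inv hp h12 h2 φ s
  right_inv s := by
    have := gf_inv hp h12 h2 (-φ) s
    rwa [neg_neg] at this
  map_add' s t := gf_add hp h12 h2 φ s t

/-- the restriction homomorphism -/
def piHom : AddAut (ZMod (p ^ ℓ₁) × ZMod (p ^ ℓ₂)) →+
    AddAut (ZMod (p ^ (ℓ₁ - 1)) × ZMod (p ^ (ℓ₂ - 1))) :=
  AddMonoidHom.mk' (fun φ => piAut hp h12 h2 φ) (by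
    intro φ ψ
    refine AddEquiv.ext fun s => ?_
    rw [AddAut.add_apply]
    exact gf_mul hp h12 h2 φ ψ s)

end Main

lemma pdvd_smul {p ℓ : ℕ} (hp : p ≠ 0) (hℓ : 2 ≤ ℓ) (u : ZMod (p ^ ℓ))
    (h : p ^ (ℓ - 1) ∣ u.val) : ∃ z, u = p • z := by
  haveI : NeZero (p ^ ℓ) := ⟨pow_ne_zero _ hp⟩
  obtain ⟨c, hc⟩ := h
  refine ⟨((p ^ (ℓ - 2) * c : ℕ) : ZMod (p ^ ℓ)), ?_⟩
  have hps : p ^ (ℓ - 1) = p * p ^ (ℓ - 2) := by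
    rw [← pow_succ']
    congr 1
    omega
  calc u = ((u.val : ℕ) : ZMod (p ^ ℓ)) := by rw [ZMod.natCast_val, ZMod.cast_id]
  _ = ((p * (p ^ (ℓ - 2) * c) : ℕ) : ZMod (p ^ ℓ)) := by rw [hc, hps, mul_assoc]
  _ = p • ((p ^ (ℓ - 2) * c : ℕ) : ZMod (p ^ ℓ)) := by
      rw [nsmul_eq_mul]
      push_cast
      ring

section Lift

variable {p ℓ₁ ℓ₂ : ℕ}

lemma lift_exists (hpp : 2 ≤ p) (h12 : ℓ₂ ≤ ℓ₁) (h2 : 1 ≤ ℓ₂)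
    (ψ : AddAut (ZMod (p ^ (ℓ₁ - 1)) × ZMod (p ^ (ℓ₂ - 1)))) :
    ∃ φ : AddAut (ZMod (p ^ ℓ₁) × ZMod (p ^ ℓ₂)), ∀ s, gf φ s = ψ s := by
  have hp : p ≠ 0 := by omega
  have h1 : 1 ≤ ℓ₁ := le_trans h2 h12
  haveI : NeZero (p ^ ℓ₁) := ⟨pow_ne_zero _ hp⟩
  haveI : NeZero (p ^ ℓ₂) := ⟨pow_ne_zero _ hp⟩
  haveI : NeZero (p ^ (ℓ₁ - 1)) := ⟨pow_ne_zero _ hp⟩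
  haveI : NeZero (p ^ (ℓ₂ - 1)) := ⟨pow_ne_zero _ hp⟩
  set α := (ψ ((1 : ZMod (p ^ (ℓ₁ - 1))), (0 : ZMod (p ^ (ℓ₂ - 1))))).1 with hα
  set β := (ψ ((1 : ZMod (p ^ (ℓ₁ - 1))), (0 : ZMod (p ^ (ℓ₂ - 1))))).2 with hβ
  set γ := (ψ ((0 : ZMod (p ^ (ℓ₁ - 1))), (1 : ZMod (p ^ (ℓ₂ - 1))))).1 with hγ
  set δ := (ψ ((0 : ZMod (p ^ (ℓ₁ - 1))), (1 : ZMod (p ^ (ℓ₂ - 1))))).2 with hδ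
  set a : ZMod (p ^ ℓ₁) := if ℓ₁ = 1 then 1 else ((α.val : ℕ) : ZMod (p ^ ℓ₁)) with ha
  set d : ZMod (p ^ ℓ₂) := if ℓ₂ = 1 then 1 else ((δ.val : ℕ) : ZMod (p ^ ℓ₂)) with hd
  -- divisibility for the (2,1) entry
  have hγdvd : (((γ.val * p ^ ℓ₂ : ℕ)) : ZMod (p ^ ℓ₁)) = 0 := by
    have h0 : (p ^ (ℓ₂ - 1)) • (((0 : ZMod (p ^ (ℓ₁ - 1))), (1 : ZMod (p ^ (ℓ₂ - 1))))) =
        (0 : ZMod (p ^ (ℓ₁ - 1)) × ZMod (p ^ (ℓ₂ - 1))) := by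
      refine Prod.ext (by simp) ?_
      show (p ^ (ℓ₂ - 1)) • (1 : ZMod (p ^ (ℓ₂ - 1))) = 0
      rw [nsmul_eq_mul, mul_one, ZMod.natCast_self]
    have h0a : (p ^ (ℓ₂ - 1)) • ψ ((0 : ZMod (p ^ (ℓ₁ - 1))), (1 : ZMod (p ^ (ℓ₂ - 1)))) = 0 := by
      rw [← map_nsmul, h0, map_zero]
    have h0' : (p ^ (ℓ₂ - 1)) • γ = 0 := by
      have := congrArg Prod.fst h0a
      simpa [← hγ] using this
    have hdvd : (p ^ (ℓ₁ - 1) : ℕ) ∣ p ^ (ℓ₂ - 1) * γ.val := by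
      rw [← ZMod.natCast_eq_zero_iff]
      push_cast
      rw [ZMod.natCast_val, ZMod.cast_id]
      rw [nsmul_eq_mul] at h0'
      push_cast at h0'
      exact h0'
    have hdvd2 : (p ^ ℓ₁ : ℕ) ∣ γ.val * p ^ ℓ₂ := by
      obtain ⟨c, hc⟩ := hdvd
      refine ⟨c, ?_⟩
      have hps : p * p ^ (ℓ₁ - 1) = p ^ ℓ₁ := by
        rw [← pow_succ', Nat.sub_add_cancel h1]
      have hps2 : p * p ^ (ℓ₂ - 1) = p ^ ℓ₂ := by
        rw [← pow_succ', Nat.sub_add_cancel h2]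
      calc γ.val * p ^ ℓ₂ = p * (p ^ (ℓ₂ - 1) * γ.val) := by rw [← hps2]; ring
      _ = p * (p ^ (ℓ₁ - 1) * c) := by rw [hc]
      _ = p ^ ℓ₁ * c := by rw [← hps]; ring
    rw [ZMod.natCast_eq_zero_iff]
    exact hdvd2
  -- the four matrix entries as homs
  set m11 : ZMod (p ^ ℓ₁) →+ ZMod (p ^ ℓ₁) := AddMonoidHom.mulLeft a with hm11
  set m21 : ZMod (p ^ ℓ₂) →+ ZMod (p ^ ℓ₁) := ZMod.lift (p ^ ℓ₂)
    ⟨(AddMonoidHom.mulLeft ((γ.val : ZMod (p ^ ℓ₁)))).comp (Int.castAddHom _), by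
      show (γ.val : ZMod (p ^ ℓ₁)) * (((p ^ ℓ₂ : ℕ) : ℤ) : ZMod (p ^ ℓ₁)) = 0
      push_cast
      exact_mod_cast hγdvd⟩ with hm21
  set m12 : ZMod (p ^ ℓ₁) →+ ZMod (p ^ ℓ₂) :=
    (AddMonoidHom.mulLeft ((β.val : ZMod (p ^ ℓ₂)))).comp
      (ZMod.castHom (pow_dvd_pow p h12) (ZMod (p ^ ℓ₂))).toAddMonoidHom with hm12
  set m22 : ZMod (p ^ ℓ₂) →+ ZMod (p ^ ℓ₂) := AddMonoidHom.mulLeft d with hm22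
  set φ₀ : ZMod (p ^ ℓ₁) × ZMod (p ^ ℓ₂) →+ ZMod (p ^ ℓ₁) × ZMod (p ^ ℓ₂) :=
    ((m11.comp (AddMonoidHom.fst _ _)) + m21.comp (AddMonoidHom.snd _ _)).prod
      ((m12.comp (AddMonoidHom.fst _ _)) + m22.comp (AddMonoidHom.snd _ _)) with hφ₀
  have hm21eval : ∀ y : ZMod (p ^ ℓ₂),
      m21 y = (γ.val : ZMod (p ^ ℓ₁)) * ((y.val : ℕ) : ZMod (p ^ ℓ₁)) := by
    intro y
    have hy : y = (((y.val : ℕ) : ℤ) : ZMod (p ^ ℓ₂)) := by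
      push_cast
      rw [ZMod.natCast_val, ZMod.cast_id]
    conv_lhs => rw [hm21, hy]
    rw [ZMod.lift_coe]
    show (γ.val : ZMod (p ^ ℓ₁)) * (((y.val : ℕ) : ℤ) : ZMod (p ^ ℓ₁)) = _
    push_cast
    ring
  have heval : ∀ x y, φ₀ (x, y) =
      (a * x + (γ.val : ZMod (p ^ ℓ₁)) * ((y.val : ℕ) : ZMod (p ^ ℓ₁)),
       (β.val : ZMod (p ^ ℓ₂)) * (ZMod.castHom (pow_dvd_pow p h12) (ZMod (p ^ ℓ₂)) x) + d * y) := by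
    intro x y
    rw [hφ₀]
    simp [AddMonoidHom.prod_apply, hm21eval, hm11, hm12, hm22]
  -- commutation with the reduction map
  have hfact1 : (1 : ℕ) < p ^ ℓ₁ := Nat.one_lt_pow (by omega) (by omega)
  have hfact2 : (1 : ℕ) < p ^ ℓ₂ := Nat.one_lt_pow (by omega) (by omega)
  haveI := Fact.mk hfact1
  haveI := Fact.mk hfact2
  have hle1 : p ^ (ℓ₁ - 1) ≤ p ^ ℓ₁ := Nat.pow_le_pow_right (by omega) (Nat.sub_le ℓ₁ 1)
  have hle2 : p ^ (ℓ₂ - 1) ≤ p ^ ℓ₂ := Nat.pow_le_pow_right (by omega) (Nat.sub_le ℓ₂ 1)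
  have hsub1 : ∀ h' : ℓ₁ = 1, Subsingleton (ZMod (p ^ (ℓ₁ - 1))) := by
    intro h'
    rw [show p ^ (ℓ₁ - 1) = 1 by rw [h']; simp]
    infer_instance
  have hsub2 : ∀ h' : ℓ₂ = 1, Subsingleton (ZMod (p ^ (ℓ₂ - 1))) := by
    intro h'
    rw [show p ^ (ℓ₂ - 1) = 1 by rw [h']; simp]
    infer_instance
  have hcomm : ∀ m, rho p ℓ₁ ℓ₂ (φ₀ m) = ψ (rho p ℓ₁ ℓ₂ m) := by
    have hext : (rho p ℓ₁ ℓ₂).comp φ₀ =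
        (ψ.toAddMonoidHom).comp (rho p ℓ₁ ℓ₂) := by
      apply prod_hom_ext
      · show rho p ℓ₁ ℓ₂ (φ₀ (1, 0)) = ψ (rho p ℓ₁ ℓ₂ (1, 0))
        have e1 : φ₀ ((1 : ZMod (p ^ ℓ₁)), (0 : ZMod (p ^ ℓ₂))) =
            (a, ((β.val : ℕ) : ZMod (p ^ ℓ₂))) := by
          rw [heval]
          simp [ZMod.castHom_apply, ZMod.cast_one (pow_dvd_pow p h12)]
        have e2 : rho p ℓ₁ ℓ₂ ((1 : ZMod (p ^ ℓ₁)), (0 : ZMod (p ^ ℓ₂))) = (1, 0) := by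
          rw [rho_apply hp h12 h2]
          simp [ZMod.val_one]
        rw [e1, e2, rho_apply hp h12 h2]
        refine Prod.ext ?_ ?_
        · by_cases hl1 : ℓ₁ = 1
          · haveI := hsub1 hl1
            exact Subsingleton.elim _ _
          · show (((a.val : ℕ)) : ZMod (p ^ (ℓ₁ - 1))) = α
            rw [ha, if_neg hl1, ZMod.val_cast_of_lt (lt_of_lt_of_le (ZMod.val_lt α) hle1),
              ZMod.natCast_val, ZMod.cast_id]
        · show ((((β.val : ℕ) : ZMod (p ^ ℓ₂)).val : ℕ) : ZMod (p ^ (ℓ₂ - 1))) = β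
          rw [ZMod.val_cast_of_lt (lt_of_lt_of_le (ZMod.val_lt β) hle2),
            ZMod.natCast_val, ZMod.cast_id]
      · show rho p ℓ₁ ℓ₂ (φ₀ (0, 1)) = ψ (rho p ℓ₁ ℓ₂ (0, 1))
        have e1 : φ₀ ((0 : ZMod (p ^ ℓ₁)), (1 : ZMod (p ^ ℓ₂))) =
            (((γ.val : ℕ) : ZMod (p ^ ℓ₁)), d) := by
          rw [heval]
          simp [ZMod.val_one]
        have e2 : rho p ℓ₁ ℓ₂ ((0 : ZMod (p ^ ℓ₁)), (1 : ZMod (p ^ ℓ₂))) = (0, 1) := by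
          rw [rho_apply hp h12 h2]
          simp [ZMod.val_one]
        rw [e1, e2, rho_apply hp h12 h2]
        refine Prod.ext ?_ ?_
        · show ((((γ.val : ℕ) : ZMod (p ^ ℓ₁)).val : ℕ) : ZMod (p ^ (ℓ₁ - 1))) = γ
          rw [ZMod.val_cast_of_lt (lt_of_lt_of_le (ZMod.val_lt γ) hle1),
            ZMod.natCast_val, ZMod.cast_id]
        · by_cases hl2 : ℓ₂ = 1
          · haveI := hsub2 hl2
            exact Subsingleton.elim _ _
          · show (((d.val : ℕ)) : ZMod (p ^ (ℓ₂ - 1))) = δ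
            rw [hd, if_neg hl2, ZMod.val_cast_of_lt (lt_of_lt_of_le (ZMod.val_lt δ) hle2),
              ZMod.natCast_val, ZMod.cast_id]
    intro m
    exact DFunLike.congr_fun hext m
  -- annihilation by p ^ ℓ₁
  have hann : ∀ x : ZMod (p ^ ℓ₁) × ZMod (p ^ ℓ₂), p ^ ℓ₁ • x = 0 := by
    intro x
    have hx1 : p ^ ℓ₁ • x.1 = 0 := by
      rw [nsmul_eq_mul]
      rw [show ((p ^ ℓ₁ : ℕ) : ZMod (p ^ ℓ₁)) = 0 from ZMod.natCast_self _, zero_mul]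
    have hx2 : p ^ ℓ₁ • x.2 = 0 := by
      rw [nsmul_eq_mul]
      rw [show ((p ^ ℓ₁ : ℕ) : ZMod (p ^ ℓ₂)) = 0 by
        rw [ZMod.natCast_eq_zero_iff]; exact pow_dvd_pow p h12, zero_mul]
    exact Prod.ext hx1 hx2
  -- mod-p surjectivity
  have hsur1 : ∀ x, ∃ y z, x = φ₀ y + p • z := by
    intro x
    obtain ⟨t, ht⟩ := ψ.surjective (rho p ℓ₁ ℓ₂ x)
    set y₀ := liftF p ℓ₁ ℓ₂ t with hy₀
    have hρ : rho p ℓ₁ ℓ₂ (φ₀ y₀) = rho p ℓ₁ ℓ₂ x := by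
      rw [hcomm, hy₀, rho_lift hp h12 h2, ht]
    set w := x - φ₀ y₀ with hwdef
    have hw : rho p ℓ₁ ℓ₂ w = 0 := by rw [hwdef, map_sub, hρ, sub_self]
    have hw' := hw
    rw [rho_apply hp h12 h2, Prod.ext_iff] at hw'
    have hdvd1 : p ^ (ℓ₁ - 1) ∣ w.1.val := by
      rw [← ZMod.natCast_eq_zero_iff]
      exact hw'.1
    have hdvd2 : p ^ (ℓ₂ - 1) ∣ w.2.val := by
      rw [← ZMod.natCast_eq_zero_iff]
      exact hw'.2
    have hxw : x = φ₀ y₀ + w := by rw [hwdef]; abel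
    by_cases hl2 : ℓ₂ = 1
    · -- second column of φ₀ is (0, id)
      have hγ0 : ((γ.val : ℕ) : ZMod (p ^ ℓ₁)) = 0 := by
        haveI := hsub2 hl2
        have : ((0 : ZMod (p ^ (ℓ₁ - 1))), (1 : ZMod (p ^ (ℓ₂ - 1)))) = 0 :=
          Prod.ext (by simp) (Subsingleton.elim _ _)
        have hγz : γ = 0 := by rw [hγ, this, map_zero, Prod.fst_zero]
        rw [hγz, ZMod.val_zero, Nat.cast_zero]
      have hd1 : d = 1 := by rw [hd, if_pos hl2]
      have hcol2 : ∀ v : ZMod (p ^ ℓ₂), φ₀ ((0 : ZMod (p ^ ℓ₁)), v) = (0, v) := by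
        intro v
        rw [heval, hγ0, hd1]
        simp
      by_cases hl1 : ℓ₁ = 1
      · have hβ0 : ((β.val : ℕ) : ZMod (p ^ ℓ₂)) = 0 := by
          haveI := hsub1 hl1
          haveI := hsub2 hl2
          have : ((1 : ZMod (p ^ (ℓ₁ - 1))), (0 : ZMod (p ^ (ℓ₂ - 1)))) = 0 :=
            Prod.ext (Subsingleton.elim _ _) (by simp)
          have hβz : β = 0 := by rw [hβ, this, map_zero, Prod.snd_zero]
          rw [hβz, ZMod.val_zero, Nat.cast_zero]
        have ha1 : a = 1 := by rw [ha, if_pos hl1]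
        have hcol1 : ∀ u : ZMod (p ^ ℓ₁), φ₀ (u, (0 : ZMod (p ^ ℓ₂))) = (u, 0) := by
          intro u
          rw [heval, ha1, hβ0]
          simp
        refine ⟨y₀ + ((w.1, 0) + (0, w.2)), 0, ?_⟩
        rw [map_add, map_add, hcol1, hcol2]
        rw [hxw]
        have : ((w.1, (0 : ZMod (p ^ ℓ₂))) + ((0 : ZMod (p ^ ℓ₁)), w.2)) = w := by
          refine Prod.ext ?_ ?_ <;> simp
        rw [this]
        simp
      · obtain ⟨z₁, hz₁⟩ := pdvd_smul hp (by omega) w.1 hdvd1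
        refine ⟨y₀ + (0, w.2), (z₁, 0), ?_⟩
        rw [map_add, hcol2, hxw]
        have hz : p • ((z₁, (0 : ZMod (p ^ ℓ₂)))) = (w.1, 0) := by
          refine Prod.ext ?_ ?_
          · show p • z₁ = w.1
            rw [← hz₁]
          · show p • (0 : ZMod (p ^ ℓ₂)) = 0
            simp
        rw [hz]
        have : (((0 : ZMod (p ^ ℓ₁)), w.2) + (w.1, 0)) = w := by
          refine Prod.ext ?_ ?_ <;> simp
        rw [add_assoc, this]
    · obtain ⟨z₁, hz₁⟩ := pdvd_smul hp (by omega) w.1 hdvd1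
      obtain ⟨z₂, hz₂⟩ := pdvd_smul hp (by omega) w.2 hdvd2
      refine ⟨y₀, (z₁, z₂), ?_⟩
      rw [hxw]
      congr 1
      refine Prod.ext ?_ ?_
      · show w.1 = p • z₁
        exact hz₁
      · show w.2 = p • z₂
        exact hz₂
  have hsurj : Function.Surjective φ₀ := nakayama φ₀ p ℓ₁ hann hsur1
  have hbij : Function.Bijective φ₀ := ⟨Finite.injective_iff_surjective.mpr hsurj, hsurj⟩
  refine ⟨AddEquiv.ofBijective φ₀ hbij, fun s => ?_⟩
  apply eF_inj hp h12 h2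
  rw [gf_key hp h12 h2]
  show φ₀ (eF p ℓ₁ ℓ₂ s) = eF p ℓ₁ ℓ₂ (ψ s)
  rw [eF_smul hp h12 h2 s, AddMonoidHom.map_nsmul, ← eF_rho hp h12 h2, hcomm,
    rho_lift hp h12 h2]

end Lift

end Stmt17

/-- Restriction of automorphisms to `p·M` gives a surjective homomorphism
`Aut(ℤ/p^ℓ₁ℤ ⊕ ℤ/p^ℓ₂ℤ) → Aut(ℤ/p^(ℓ₁−1)ℤ ⊕ ℤ/p^(ℓ₂−1)ℤ)`, where `pM` is identified with
`ℤ/p^(ℓ₁−1)ℤ ⊕ ℤ/p^(ℓ₂−1)ℤ` via `(s₁, s₂) ↦ (p·s̃₁, p·s̃₂)`. -/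
theorem stmt_17 (p ℓ₁ ℓ₂ : ℕ) (hp : p.Prime) (h12 : ℓ₂ ≤ ℓ₁) (h2 : 1 ≤ ℓ₂) :
    ∃ π : AddAut (ZMod (p ^ ℓ₁) × ZMod (p ^ ℓ₂)) →+
        AddAut (ZMod (p ^ (ℓ₁ - 1)) × ZMod (p ^ (ℓ₂ - 1))),
      Function.Surjective π ∧
      ∀ (φ : AddAut (ZMod (p ^ ℓ₁) × ZMod (p ^ ℓ₂)))
        (s : ZMod (p ^ (ℓ₁ - 1)) × ZMod (p ^ (ℓ₂ - 1))),
        φ ((p : ZMod (p ^ ℓ₁)) * (s.1.val : ZMod (p ^ ℓ₁)),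
            (p : ZMod (p ^ ℓ₂)) * (s.2.val : ZMod (p ^ ℓ₂))) =
          ((p : ZMod (p ^ ℓ₁)) * (((π φ) s).1.val : ZMod (p ^ ℓ₁)),
            (p : ZMod (p ^ ℓ₂)) * (((π φ) s).2.val : ZMod (p ^ ℓ₂))) := by
  have hp0 : p ≠ 0 := hp.pos.ne'
  refine ⟨Stmt17.piHom hp0 h12 h2, ?_, ?_⟩
  · intro ψ
    obtain ⟨φ, hφ⟩ := Stmt17.lift_exists hp.two_le h12 h2 ψ
    exact ⟨φ, AddEquiv.ext hφ⟩
  · intro φ s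
    exact (Stmt17.gf_key hp0 h12 h2 φ s).symm
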